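/- Let m be odd and let S ⊆ F_2^m satisfy: S contains a vector of weight 1; S is closed under the operation of flipping any two 0-coordinates of a member to 1 (when weight ≤ m−2); and S is closed under complementation. Then |S| = 2^m, i.e., S contains exactly all vectors; in particular starting from a single weight-1 vector, all weight-1 vectors are obtained. -/

import Mathlib

/-- The (Hamming) weight of a 0-1 vector of length `m`. -/
def wt {m : ℕ} (α : Fin m → ZMod 2) : ℕ :=
  (Finset.univ.filter (fun i => α i = 1)).card

/-- The `i`-th standard basis vector of `F₂^m`. -/
def stdBasis {m : ℕ} (i : Fin m) : Fin m → ZMod 2 :=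
  fun j => if j = i then 1 else 0

/-- The all-ones vector of `F₂^m`. -/
def allOnes (m : ℕ) : Fin m → ZMod 2 := fun _ => 1

lemma zmod2_cases (x : ZMod 2) : x = 0 ∨ x = 1 := by revert x; decide

lemma wt_le {m : ℕ} (α : Fin m → ZMod 2) : wt α ≤ m := by
  have := Finset.card_filter_le (Finset.univ : Finset (Fin m)) (fun i => α i = 1)
  simpa [wt] using this

lemma add_std_apply {m : ℕ} (β : Fin m → ZMod 2) (i l : Fin m) :
    (β + stdBasis i) l = β l + (if l = i then 1 else 0) := rfl

lemma wt_add_std_of_one {m : ℕ} (β : Fin m → ZMod 2) (i : Fin m) (h : β i = 1) :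
    wt (β + stdBasis i) = wt β - 1 := by
  have hmem : i ∈ Finset.univ.filter (fun l => β l = 1) := by simp [h]
  have hset : Finset.univ.filter (fun l => (β + stdBasis i) l = 1)
      = (Finset.univ.filter (fun l => β l = 1)).erase i := by
    ext l
    simp only [Finset.mem_filter]
    simp only [Finset.mem_filter, Finset.mem_univ, true_and, Finset.mem_erase,
      add_std_apply]
    by_cases hl : l = i
    · subst hl; simp [h]
    · simp [hl]
  rw [wt, hset, Finset.card_erase_of_mem hmem, wt]

lemma wt_add_std_of_zero {m : ℕ} (β : Fin m → ZMod 2) (i : Fin m) (h : β i = 0) :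
    wt (β + stdBasis i) = wt β + 1 := by
  have hmem : i ∉ Finset.univ.filter (fun l => β l = 1) := by simp [h]
  have hset : Finset.univ.filter (fun l => (β + stdBasis i) l = 1)
      = insert i (Finset.univ.filter (fun l => β l = 1)) := by
    ext l
    simp only [Finset.mem_filter]
    simp only [Finset.mem_filter, Finset.mem_univ, true_and, Finset.mem_insert,
      add_std_apply]
    by_cases hl : l = i
    · subst hl; simp [h]
    · simp [hl]
  rw [wt, hset, Finset.card_insert_of_notMem hmem, wt]

lemma wt_compl {m : ℕ} (α : Fin m → ZMod 2) : wt (α + allOnes m) = m - wt α := by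
  have h2 : ∀ x : ZMod 2, (x + 1 = 1) ↔ ¬ x = 1 := by decide
  have hset : Finset.univ.filter (fun l => (α + allOnes m) l = 1)
      = Finset.univ \ Finset.univ.filter (fun l => α l = 1) := by
    ext l
    simp only [Finset.mem_filter]
    simp only [Finset.mem_filter, Finset.mem_univ, true_and, Finset.mem_sdiff,
      Pi.add_apply, allOnes]
    exact h2 (α l)
  rw [wt, hset, Finset.card_sdiff_of_subset (Finset.filter_subset _ _)]
  simp [wt]

lemma eq_stdBasis_of_wt_one {m : ℕ} (β : Fin m → ZMod 2) (k : Fin m)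
    (h1 : wt β = 1) (hk : β k = 1) : β = stdBasis k := by
  obtain ⟨a, ha⟩ := Finset.card_eq_one.mp h1
  have hka : k = a := by
    have : k ∈ Finset.univ.filter (fun l => β l = 1) := by simp [hk]
    rw [ha] at this; simpa using this
  subst hka
  funext l
  by_cases hl : l = k
  · subst hl; simp [stdBasis, hk]
  · have : l ∉ Finset.univ.filter (fun l => β l = 1) := by
      rw [ha]; simp [hl]
    simp only [Finset.mem_filter, Finset.mem_univ, true_and] at this
    rcases zmod2_cases (β l) with h | h
    · simp [stdBasis, hl, h]
    · exact absurd h this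

lemma double_flip_cancel {m : ℕ} (β : Fin m → ZMod 2) (i j : Fin m) :
    β + stdBasis i + stdBasis j + stdBasis i + stdBasis j = β := by
  funext l
  have h : ∀ x y z : ZMod 2, x + y + z + y + z = x := by decide
  simp only [Pi.add_apply]
  exact h (β l) (stdBasis i l) (stdBasis j l)

lemma double_compl_cancel {m : ℕ} (β : Fin m → ZMod 2) :
    β + allOnes m + allOnes m = β := by
  funext l
  have h : ∀ x : ZMod 2, x + 1 + 1 = x := by decide
  simp only [Pi.add_apply, allOnes]
  exact h (β l)

/-- For `m` odd, a set `S ⊆ F₂^m` containing a vector of weight 1, closed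
under flipping any two zero coordinates of a member of weight ≤ m-2, and closed under
complementation, is all of `F₂^m`; in particular it has exactly `2^m` elements. -/
theorem single_weight_one_generates (m : ℕ) (hm : Odd m) (S : Set (Fin m → ZMod 2))
    (hone : ∃ α ∈ S, wt α = 1)
    (hflip : ∀ α ∈ S, wt α ≤ m - 2 → ∀ i j : Fin m, i ≠ j → α i = 0 → α j = 0 →
      α + stdBasis i + stdBasis j ∈ S)
    (hcompl : ∀ α ∈ S, α + allOnes m ∈ S) :
    S = Set.univ := by
  obtain ⟨α, hαS, hα1⟩ := hone
  -- get the coordinate k where α is 1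
  have hne : (Finset.univ.filter (fun l => α l = 1)).Nonempty := by
    rw [← Finset.card_pos, ← wt, hα1]; norm_num
  obtain ⟨k, hkmem⟩ := hne
  have hαk : α k = 1 := by
    simpa using (Finset.mem_filter.mp hkmem).2
  have hαstd : α = stdBasis k := eq_stdBasis_of_wt_one α k hα1 hαk
  have hmodd : m % 2 = 1 := Nat.odd_iff.mp hm
  -- Step 1: all odd-weight vectors with k-th coordinate 1 are in S.
  have key : ∀ n, ∀ β : Fin m → ZMod 2, wt β = n → Odd n → β k = 1 → β ∈ S := by
    intro n
    induction n using Nat.strong_induction_on with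
    | _ n ih =>
      intro β hwt hodd hk
      by_cases hn1 : n = 1
      · subst hn1
        have : β = stdBasis k := eq_stdBasis_of_wt_one β k hwt hk
        rw [this, ← hαstd]; exact hαS
      · have hn3 : 3 ≤ n := by
          rcases hodd with ⟨t, ht⟩; omega
      -- find two other coordinates i ≠ j (both ≠ k) where β is 1
        have hcard : 1 < ((Finset.univ.filter (fun l => β l = 1)).erase k).card := by
          rw [Finset.card_erase_of_mem (by simp [hk]), ← wt, hwt]; omega
        obtain ⟨i, hi, j, hj, hij⟩ := Finset.one_lt_card.mp hcard
        obtain ⟨hik, hi1⟩ := Finset.mem_erase.mp hi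
        obtain ⟨hjk, hj1⟩ := Finset.mem_erase.mp hj
        have hβi : β i = 1 := by simpa using (Finset.mem_filter.mp hi1).2
        have hβj : β j = 1 := by simpa using (Finset.mem_filter.mp hj1).2
        set β' := β + stdBasis i + stdBasis j with hβ'
        have hwi : wt (β + stdBasis i) = n - 1 := by
          rw [wt_add_std_of_one β i hβi, hwt]
        have hmidj : (β + stdBasis i) j = 1 := by
          rw [add_std_apply, if_neg hij.symm, add_zero]; exact hβj
        have hwβ' : wt β' = n - 2 := by
          rw [hβ', wt_add_std_of_one _ j hmidj, hwi]; omega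
        have hβ'k : β' k = 1 := by
          simp only [hβ', Pi.add_apply, stdBasis, if_neg hik.symm, if_neg hjk.symm,
            add_zero]
          exact hk
        have hβ'i : β' i = 0 := by
          simp only [hβ', Pi.add_apply, stdBasis, if_pos rfl, if_neg hij, add_zero]
          rw [hβi]; decide
        have hβ'j : β' j = 0 := by
          simp only [hβ', Pi.add_apply, stdBasis, if_pos rfl, if_neg hij.symm]
          rw [hβj]; decide
        have hβ'S : β' ∈ S := by
          apply ih (n - 2) (by omega) β' hwβ'
          · rcases hodd with ⟨t, ht⟩
            exact ⟨t - 1, by omega⟩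
          · exact hβ'k
        have hwle : wt β' ≤ m - 2 := by
          have := wt_le β
          rw [hwβ']; omega
        have := hflip β' hβ'S hwle i j hij hβ'i hβ'j
        rwa [hβ', double_flip_cancel] at this
  -- Step 2: all even-weight vectors with k-th coordinate 0.
  have even0 : ∀ β : Fin m → ZMod 2, Even (wt β) → β k = 0 → β ∈ S := by
    intro β he h0
    set γ := β + allOnes m with hγ
    have hwγ : wt γ = m - wt β := wt_compl β
    have hγk : γ k = 1 := by
      simp only [hγ, Pi.add_apply, allOnes, h0, zero_add]
    have hodd : Odd (wt γ) := by
      rw [hwγ, Nat.odd_iff]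
      have h1 := wt_le β
      have h2 := Nat.even_iff.mp he
      omega
    have hγS : γ ∈ S := key (wt γ) γ rfl hodd hγk
    have := hcompl γ hγS
    rwa [hγ, double_compl_cancel] at this
  -- Step 3: all even-weight vectors with k-th coordinate 1.
  have even1 : ∀ β : Fin m → ZMod 2, Even (wt β) → β k = 1 → β ∈ S := by
    intro β he h1
    have hk1 : k ∈ Finset.univ.filter (fun l => β l = 1) := by simp [h1]
    have hwpos : 1 ≤ wt β := by
      rw [wt]; exact Finset.card_pos.mpr ⟨k, hk1⟩
    have hw2 : 2 ≤ wt β := by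
      rcases he with ⟨t, ht⟩; omega
    have hne' : ((Finset.univ.filter (fun l => β l = 1)).erase k).Nonempty := by
      rw [← Finset.card_pos, Finset.card_erase_of_mem hk1, ← wt]; omega
    obtain ⟨j, hj⟩ := hne'
    obtain ⟨hjk, hj1⟩ := Finset.mem_erase.mp hj
    have hβj : β j = 1 := by simpa using (Finset.mem_filter.mp hj1).2
    have hkj : k ≠ j := fun h => hjk h.symm
    set β' := β + stdBasis k + stdBasis j with hβ'
    have hwk : wt (β + stdBasis k) = wt β - 1 := wt_add_std_of_one β k h1
    have hmidj : (β + stdBasis k) j = 1 := by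
      rw [add_std_apply, if_neg hjk, add_zero]; exact hβj
    have hwβ' : wt β' = wt β - 2 := by
      rw [hβ', wt_add_std_of_one _ j hmidj, hwk]; omega
    have hβ'k : β' k = 0 := by
      simp only [hβ', Pi.add_apply, stdBasis, if_pos rfl, if_neg hkj, add_zero]
      rw [h1]; decide
    have hβ'j : β' j = 0 := by
      simp only [hβ', Pi.add_apply, stdBasis, if_pos rfl, if_neg hkj.symm]
      rw [hβj]; decide
    have hβ'S : β' ∈ S := by
      apply even0 β'
      · rw [hwβ']
        rcases he with ⟨t, ht⟩
        exact ⟨t - 1, by omega⟩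
      · exact hβ'k
    have hwle : wt β' ≤ m - 2 := by
      have := wt_le β
      rw [hwβ']; omega
    have := hflip β' hβ'S hwle k j hkj hβ'k hβ'j
    rwa [hβ', double_flip_cancel] at this
  -- Step 4: all odd-weight vectors with k-th coordinate 0.
  have odd0 : ∀ β : Fin m → ZMod 2, Odd (wt β) → β k = 0 → β ∈ S := by
    intro β ho h0
    set γ := β + allOnes m with hγ
    have hwγ : wt γ = m - wt β := wt_compl β
    have hγk : γ k = 1 := by
      simp only [hγ, Pi.add_apply, allOnes, h0, zero_add]
    have heven : Even (wt γ) := by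
      rw [hwγ, Nat.even_iff]
      have h1 := wt_le β
      have h2 := Nat.odd_iff.mp ho
      omega
    have hγS : γ ∈ S := even1 γ heven hγk
    have := hcompl γ hγS
    rwa [hγ, double_compl_cancel] at this
  -- Conclusion
  ext β
  simp only [Set.mem_univ, iff_true]
  rcases Nat.even_or_odd (wt β) with he | ho
  · rcases zmod2_cases (β k) with h | h
    · exact even0 β he h
    · exact even1 β he h
  · rcases zmod2_cases (β k) with h | h
    · exact odd0 β ho h
    · exact key (wt β) β rfl ho h
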